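/- arXiv:2408.14616 — 6 statements merged into one kernel-verified Lean document; each statement's English description precedes it below -/
import Mathlib

section
/- Let Φ : B(α₀, r) ⊆ ℝ^n → ℝ^N be a C²-function on the open ball of radius r > 0 centered at α₀, and suppose there are constants β, γ > 0 such that (1) ⟨DΦ(α₀)ᵀ DΦ(α₀) v, v⟩ ≥ β‖v‖² for all v ∈ ℝ^n, and (2) ‖D²Φ(α)‖ ≤ γ for all α ∈ B(α₀, r). Define r_{β,γ} = min{ r, √β/(6γ) }. Then Φ restricted to the ball B(α₀, r_{β,γ}) is injective. -/
open Metric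
open scoped RealInnerProductSpace

/-- Quantitative injectivity (Lemma 3): if `Φ : B(α₀,r) ⊆ ℝ^n → ℝ^N` is `C²`,
`⟨DΦ(α₀)ᵀ DΦ(α₀) v, v⟩ ≥ β ‖v‖²` for all `v`, and `‖D²Φ(α)‖ ≤ γ` on the ball, then
`Φ` is one-to-one on the ball `B(α₀, min r (√β / (6γ)))`. -/
theorem stmt_3 (n N : ℕ) (α₀ : EuclideanSpace ℝ (Fin n)) (r β γ : ℝ)
    (hr : 0 < r) (hβ : 0 < β) (hγ : 0 < γ)
    (Φ : EuclideanSpace ℝ (Fin n) → EuclideanSpace ℝ (Fin N))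
    (hΦ : ContDiffOn ℝ 2 Φ (ball α₀ r))
    (h1 : ∀ v : EuclideanSpace ℝ (Fin n),
      β * ‖v‖ ^ 2 ≤ ⟪(ContinuousLinearMap.adjoint (fderiv ℝ Φ α₀)) ((fderiv ℝ Φ α₀) v), v⟫)
    (h2 : ∀ α ∈ ball α₀ r, ‖iteratedFDeriv ℝ 2 Φ α‖ ≤ γ) :
    Set.InjOn Φ (ball α₀ (min r (Real.sqrt β / (6 * γ)))) := by
  set ρ := min r (Real.sqrt β / (6 * γ)) with hρ
  set A := fderiv ℝ Φ α₀ with hA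
  have hsub : ball α₀ ρ ⊆ ball α₀ r := ball_subset_ball (min_le_left _ _)
  have hβ' : 0 < Real.sqrt β := Real.sqrt_pos.mpr hβ
  -- lower bound : √β ‖v‖ ≤ ‖A v‖
  have hlow : ∀ v : EuclideanSpace ℝ (Fin n), Real.sqrt β * ‖v‖ ≤ ‖A v‖ := by
    intro v
    have h := h1 v
    rw [ContinuousLinearMap.adjoint_inner_left, real_inner_self_eq_norm_sq] at h
    nlinarith [norm_nonneg (A v), norm_nonneg v, Real.sq_sqrt hβ.le, Real.sqrt_nonneg β,
      mul_nonneg (Real.sqrt_nonneg β) (norm_nonneg v)]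
  -- derivative of the derivative bounded by γ
  have hg : ContDiffOn ℝ 1 (fun z => fderiv ℝ Φ z) (ball α₀ r) :=
    hΦ.fderiv_of_isOpen isOpen_ball (by norm_num)
  have hgd : ∀ z ∈ ball α₀ r, DifferentiableAt ℝ (fun z => fderiv ℝ Φ z) z := fun z hz =>
    (hg.differentiableOn one_ne_zero).differentiableAt (isOpen_ball.mem_nhds hz)
  have hbound2 : ∀ z ∈ ball α₀ r, ‖fderiv ℝ (fun z => fderiv ℝ Φ z) z‖ ≤ γ := by
    intro z hz
    apply ContinuousLinearMap.opNorm_le_bound _ hγ.le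
    intro v
    apply ContinuousLinearMap.opNorm_le_bound _ (mul_nonneg hγ.le (norm_nonneg v))
    intro w
    have he : fderiv ℝ (fun z => fderiv ℝ Φ z) z v w = iteratedFDeriv ℝ 2 Φ z ![v, w] := by
      rw [iteratedFDeriv_two_apply]
      simp
    rw [he]
    calc ‖iteratedFDeriv ℝ 2 Φ z ![v, w]‖
        ≤ ‖iteratedFDeriv ℝ 2 Φ z‖ * ∏ i, ‖(![v, w]) i‖ :=
          ContinuousMultilinearMap.le_opNorm _ _
      _ ≤ γ * (‖v‖ * ‖w‖) := by
          rw [Fin.prod_univ_two]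
          have h2' := h2 z hz
          have : (0:ℝ) ≤ ‖v‖ * ‖w‖ := mul_nonneg (norm_nonneg _) (norm_nonneg _)
          simp only [Matrix.cons_val_zero, Matrix.cons_val_one, Matrix.head_cons]
          nlinarith [norm_nonneg (iteratedFDeriv ℝ 2 Φ z)]
      _ = γ * ‖v‖ * ‖w‖ := by ring
  -- Lipschitz estimate for the derivative
  have hlip : ∀ z ∈ ball α₀ r, ‖fderiv ℝ Φ z - A‖ ≤ γ * ‖z - α₀‖ := by
    intro z hz
    have := (convex_ball α₀ r).norm_image_sub_le_of_norm_fderiv_le hgd hbound2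
      (mem_ball_self hr) hz
    simpa using this
  -- on the small ball the derivative is within √β/6 of A
  have hsmall : ∀ z ∈ ball α₀ ρ, ‖fderiv ℝ Φ z - A‖ ≤ Real.sqrt β / 6 := by
    intro z hz
    have h1' : ‖z - α₀‖ < ρ := by simpa [dist_eq_norm] using hz
    have h2' : ρ ≤ Real.sqrt β / (6 * γ) := min_le_right _ _
    have := hlip z (hsub hz)
    have : γ * ‖z - α₀‖ ≤ γ * (Real.sqrt β / (6 * γ)) :=
      mul_le_mul_of_nonneg_left (le_of_lt (lt_of_lt_of_le h1' h2')) hγ.le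
    have heq : γ * (Real.sqrt β / (6 * γ)) = Real.sqrt β / 6 := by
      field_simp
    linarith [hlip z (hsub hz)]
  -- main argument
  intro x hx y hy hxy
  have hdΦ : ∀ z ∈ ball α₀ ρ, DifferentiableAt ℝ Φ z := fun z hz =>
    (hΦ.differentiableOn two_ne_zero).differentiableAt (isOpen_ball.mem_nhds (hsub hz))
  have hmvt := (convex_ball α₀ ρ).norm_image_sub_le_of_norm_fderiv_le'
    hdΦ hsmall hx hy
  rw [hxy, sub_self, zero_sub, norm_neg] at hmvt
  have hlow' := hlow (y - x)
  have hnn : ‖y - x‖ = 0 := by nlinarith [norm_nonneg (y - x)]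
  have : y - x = 0 := norm_eq_zero.mp hnn
  have : y = x := by
    have := sub_eq_zero.mp this
    exact this
  exact this.symm
end

section
/- Let Φ : B(α₀, r) ⊆ ℝ^n → ℝ^N be a C²-function and β, γ > 0 constants such that (1) ⟨DΦ(α₀)ᵀ DΦ(α₀) v, v⟩ ≥ β‖v‖² for all v ∈ ℝ^n, and (2) ‖D²Φ(α)‖ ≤ γ for all α ∈ B(α₀, r). Then for r_{β,γ} = min{ r, √β/(6γ) } and all x, y ∈ B(α₀, r_{β,γ}), one has ‖Φ(x) − Φ(y)‖ ≥ (√β/2)·‖x − y‖. -/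
open Metric
open scoped RealInnerProductSpace

lemma norm_iteratedFDeriv_one' {E F : Type*} [NormedAddCommGroup E] [NormedSpace ℝ E]
    [NormedAddCommGroup F] [NormedSpace ℝ F] (f : E → F) (x : E) :
    ‖iteratedFDeriv ℝ 1 f x‖ = ‖fderiv ℝ f x‖ := by
  rw [iteratedFDeriv_succ_eq_comp_right, Function.comp_apply,
    LinearIsometryEquiv.norm_map, norm_iteratedFDeriv_zero]

/-- Quantitative lower bound: under the hypotheses of the injectivity lemma
(`⟨DΦ(α₀)ᵀ DΦ(α₀) v, v⟩ ≥ β ‖v‖²` and `‖D²Φ(α)‖ ≤ γ` on `B(α₀,r)`), for all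
`x, y ∈ B(α₀, min r (√β/(6γ)))` one has `‖Φ(x) − Φ(y)‖ ≥ (√β/2) ‖x − y‖`. -/
theorem stmt_4 (n N : ℕ) (α₀ : EuclideanSpace ℝ (Fin n)) (r β γ : ℝ)
    (hr : 0 < r) (hβ : 0 < β) (hγ : 0 < γ)
    (Φ : EuclideanSpace ℝ (Fin n) → EuclideanSpace ℝ (Fin N))
    (hΦ : ContDiffOn ℝ 2 Φ (ball α₀ r))
    (h1 : ∀ v : EuclideanSpace ℝ (Fin n),
      β * ‖v‖ ^ 2 ≤ ⟪(ContinuousLinearMap.adjoint (fderiv ℝ Φ α₀)) ((fderiv ℝ Φ α₀) v), v⟫)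
    (h2 : ∀ α ∈ ball α₀ r, ‖iteratedFDeriv ℝ 2 Φ α‖ ≤ γ) :
    ∀ x ∈ ball α₀ (min r (Real.sqrt β / (6 * γ))),
      ∀ y ∈ ball α₀ (min r (Real.sqrt β / (6 * γ))),
        Real.sqrt β / 2 * ‖x - y‖ ≤ ‖Φ x - Φ y‖ := by
  set c := Real.sqrt β with hc
  have hc0 : 0 < c := Real.sqrt_pos.mpr hβ
  have hc2 : c ^ 2 = β := Real.sq_sqrt hβ.le
  set r' := min r (c / (6 * γ)) with hr'
  set A := fderiv ℝ Φ α₀ with hA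
  -- lower bound for A
  have hAlow : ∀ v : EuclideanSpace ℝ (Fin n), c * ‖v‖ ≤ ‖A v‖ := by
    intro v
    have h := h1 v
    rw [ContinuousLinearMap.adjoint_inner_left, real_inner_self_eq_norm_sq] at h
    nlinarith [norm_nonneg (A v), norm_nonneg v, hc0.le]
  -- differentiability
  have hball : ball α₀ r' ⊆ ball α₀ r := ball_subset_ball (min_le_left _ _)
  have hd : ∀ a ∈ ball α₀ r, DifferentiableAt ℝ Φ a := fun a ha =>
    (hΦ.differentiableOn (by norm_num)).differentiableAt (isOpen_ball.mem_nhds ha)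
  have hg : ContDiffOn ℝ 1 (fderiv ℝ Φ) (ball α₀ r) :=
    hΦ.fderiv_of_isOpen isOpen_ball (by norm_num)
  have hgd : ∀ a ∈ ball α₀ r, DifferentiableAt ℝ (fderiv ℝ Φ) a := fun a ha =>
    (hg.differentiableOn one_ne_zero).differentiableAt (isOpen_ball.mem_nhds ha)
  have hgb : ∀ a ∈ ball α₀ r, ‖fderiv ℝ (fderiv ℝ Φ) a‖ ≤ γ := by
    intro a ha
    have := norm_iteratedFDeriv_fderiv (𝕜 := ℝ) (f := Φ) (x := a) (n := 1)
    rw [norm_iteratedFDeriv_one'] at this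
    rw [this]
    exact h2 a ha
  -- Lipschitz bound for the derivative
  have hLip : ∀ x ∈ ball α₀ r, ‖fderiv ℝ Φ x - A‖ ≤ γ * ‖x - α₀‖ := by
    intro x hx
    exact (convex_ball α₀ r).norm_image_sub_le_of_norm_fderiv_le hgd hgb
      (mem_ball_self hr) hx
  -- bound on the derivative difference on the small ball
  have hr'le : r' ≤ c / (6 * γ) := min_le_right _ _
  have hbound : ∀ x ∈ ball α₀ r', ‖fderiv ℝ Φ x - A‖ ≤ c / 6 := by
    intro x hx
    have h1' : ‖x - α₀‖ < r' := mem_ball_iff_norm.mp hx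
    calc ‖fderiv ℝ Φ x - A‖ ≤ γ * ‖x - α₀‖ := hLip x (hball hx)
      _ ≤ γ * (c / (6 * γ)) := by
          apply mul_le_mul_of_nonneg_left (le_trans h1'.le hr'le) hγ.le
      _ = c / 6 := by field_simp
  intro x hx y hy
  have herr : ‖Φ x - Φ y - A (x - y)‖ ≤ c / 6 * ‖x - y‖ :=
    (convex_ball α₀ r').norm_image_sub_le_of_norm_fderiv_le'
      (fun a ha => hd a (hball ha)) hbound hy hx
  have hAv : c * ‖x - y‖ ≤ ‖A (x - y)‖ := hAlow (x - y)
  have htri : ‖A (x - y)‖ ≤ ‖Φ x - Φ y‖ + ‖Φ x - Φ y - A (x - y)‖ := by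
    have := norm_sub_le (Φ x - Φ y) (Φ x - Φ y - A (x - y))
    simpa using this
  have hnn : 0 ≤ c * ‖x - y‖ := by positivity
  nlinarith [norm_nonneg (x - y)]
end

section
/- Fix h > 0 and n ≥ 1, and consider the set A = { α₀ ∈ M_n(ℝ) : the matrix exponential exp(h·α₀) has n pairwise distinct complex eigenvalues }. Then A is an open subset of the space of n×n real matrices, and its complement A^c has Lebesgue measure zero in M_n(ℝ) identified with ℝ^{n²}. -/
open MeasureTheory Filter Topology Set Polynomial Matrix

open MeasureTheory Filter Topology Set

lemma countable_zero_set_of_analytic {f : ℝ → ℂ} (hf : ∀ x, AnalyticAt ℝ f x)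
    {a : ℝ} (ha : f a ≠ 0) : {x : ℝ | f x = 0}.Countable := by
  set Z := {x : ℝ | f x = 0} with hZdef
  have hdisc : DiscreteTopology Z := by
    rw [discreteTopology_subtype_iff]
    intro z hz
    rcases (hf z).eventually_eq_zero_or_eventually_ne_zero with hev | hev
    · exfalso
      have hA : AnalyticOnNhd ℝ f Set.univ := fun x _ => hf x
      have heq : Set.EqOn f 0 Set.univ :=
        hA.eqOn_zero_of_preconnected_of_eventuallyEq_zero isPreconnected_univ (Set.mem_univ z) hev
      exact ha (heq (Set.mem_univ a))
    · have h1 : ∀ᶠ x in 𝓝[≠] z ⊓ 𝓟 Z, f x ≠ 0 := hev.filter_mono inf_le_left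
      have h2 : ∀ᶠ x in 𝓝[≠] z ⊓ 𝓟 Z, f x = 0 := by
        refine Filter.eventually_inf_principal.mpr (Filter.Eventually.of_forall ?_)
        intro x hx; exact hx
      exact Filter.eventually_false_iff_eq_bot.mp ((h1.and h2).mono fun x hx => hx.1 hx.2)
  exact Set.countable_coe_iff.mp (TopologicalSpace.separableSpace_iff_countable.mp inferInstance)

open MeasureTheory Filter Topology Set

lemma volume_zero_set_of_analytic_fin : ∀ (d : ℕ) (f : (Fin d → ℝ) → ℂ),
    (∀ x, AnalyticAt ℝ f x) → (∃ a, f a ≠ 0) → volume {x | f x = 0} = 0 := by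
  intro d
  induction d with
  | zero =>
    intro f hf ⟨a, ha⟩
    have : {x : Fin 0 → ℝ | f x = 0} = ∅ := by
      ext x
      simp only [Set.mem_setOf_eq, Set.mem_empty_iff_false, iff_false]
      have : x = a := Subsingleton.elim _ _
      rw [this]; exact ha
    simp [this]
  | succ d ih =>
    intro f hf ⟨a, ha⟩
    -- the linear map (t, y) ↦ Fin.cons t y
    have hfc : Continuous f := continuous_iff_continuousAt.mpr fun x => (hf x).continuousAt
    let L₀ : (ℝ × (Fin d → ℝ)) →ₗ[ℝ] (Fin (d+1) → ℝ) :=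
      { toFun := fun p => Fin.cons p.1 p.2
        map_add' := by
          intro p q; funext i
          refine Fin.cases ?_ ?_ i <;> simp
        map_smul' := by
          intro c p; funext i
          refine Fin.cases ?_ ?_ i <;> simp }
    let L : (ℝ × (Fin d → ℝ)) →L[ℝ] (Fin (d+1) → ℝ) := L₀.toContinuousLinearMap
    let g : (ℝ × (Fin d → ℝ)) → ℂ := fun p => f (L p)
    have hg : ∀ p, AnalyticAt ℝ g p := fun p => (hf (L p)).comp (L.analyticAt p)
    have hgc : Continuous g := hfc.comp L.continuous
    let e := MeasurableEquiv.piFinSuccAbove (fun _ : Fin (d+1) => ℝ) 0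
    have hL : ∀ p, e.symm p = L p := by
      intro p
      show (MeasurableEquiv.piFinSuccAbove (fun _ : Fin (d+1) => ℝ) 0).symm p = Fin.cons p.1 p.2
      simp [MeasurableEquiv.piFinSuccAbove, Fin.insertNth_zero, Fin.consEquiv]
    have hpres := MeasureTheory.volume_preserving_piFinSuccAbove (fun _ : Fin (d+1) => ℝ) 0
    have hZ'meas : MeasurableSet {p : ℝ × (Fin d → ℝ) | g p = 0} :=
      (isClosed_eq hgc continuous_const).measurableSet
    have hpre : e ⁻¹' {p | g p = 0} = {x | f x = 0} := by
      ext x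
      simp only [Set.mem_preimage, Set.mem_setOf_eq, g]
      rw [← hL (e x), MeasurableEquiv.symm_apply_apply]
    have hvol : volume {x : Fin (d+1) → ℝ | f x = 0} = (volume : Measure (ℝ × (Fin d → ℝ))) {p | g p = 0} := by
      rw [← hpre]
      exact hpres.measure_preimage hZ'meas.nullMeasurableSet
    rw [hvol, MeasureTheory.Measure.volume_eq_prod, Measure.prod_apply hZ'meas]
    -- the bad set
    set y₀ : Fin d → ℝ := (e a).2 with hy₀
    have hwit : g ((e a).1, y₀) ≠ 0 := by
      have : ((e a).1, y₀) = e a := rfl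
      rw [this]
      show f (L (e a)) ≠ 0
      rw [← hL (e a), MeasurableEquiv.symm_apply_apply]
      exact ha
    have hφ : ∀ t, AnalyticAt ℝ (fun t => g (t, y₀)) t := by
      intro t
      have hmk : AnalyticAt ℝ (fun s : ℝ => ((s : ℝ), y₀)) t := analyticAt_id.prod analyticAt_const
      exact AnalyticAt.comp (f := fun s : ℝ => (s, y₀)) (hg (t, y₀)) hmk
    have hB : {t : ℝ | g (t, y₀) = 0}.Countable :=
      countable_zero_set_of_analytic hφ hwit
    have hae : ∀ᵐ t : ℝ, volume (Prod.mk t ⁻¹' {p : ℝ × (Fin d → ℝ) | g p = 0}) = 0 := by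
      have hBnull : volume {t : ℝ | g (t, y₀) = 0} = 0 := hB.measure_zero _
      filter_upwards [(MeasureTheory.measure_eq_zero_iff_ae_notMem).mp hBnull] with t ht
      have hslice : ∀ y, AnalyticAt ℝ (fun y => g (t, y)) y := by
        intro y
        have hmk : AnalyticAt ℝ (fun y : Fin d → ℝ => ((t : ℝ), y)) y := analyticAt_const.prod analyticAt_id
        exact AnalyticAt.comp (f := fun y : Fin d → ℝ => ((t : ℝ), y)) (hg (t, y)) hmk
      have : Prod.mk t ⁻¹' {p : ℝ × (Fin d → ℝ) | g p = 0} = {y | g (t, y) = 0} := rfl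
      rw [this]
      exact ih _ hslice ⟨y₀, ht⟩
    rw [lintegral_congr_ae (hae.mono fun t ht => ht)]
    simp

open MeasureTheory Filter Topology Set

/-- uncurrying measurable equiv for matrices -/
def matUncurry (n : ℕ) : (Fin n → Fin n → ℝ) ≃ᵐ (Fin n × Fin n → ℝ) where
  toEquiv := (Equiv.curry (Fin n) (Fin n) ℝ).symm
  measurable_toFun := measurable_pi_lambda _ fun p =>
    (measurable_pi_apply p.2).comp (measurable_pi_apply p.1)
  measurable_invFun := measurable_pi_lambda _ fun i => measurable_pi_lambda _ fun j =>
    measurable_pi_apply (i, j)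

lemma matUncurry_measurePreserving (n : ℕ) :
    MeasurePreserving (matUncurry n) volume volume := by
  refine ⟨(matUncurry n).measurable, (Measure.pi_eq fun s hs => ?_).symm⟩
  rw [MeasurableEquiv.map_apply]
  have hpre : (matUncurry n) ⁻¹' (Set.univ.pi s) =
      Set.univ.pi (fun i : Fin n => Set.univ.pi fun j : Fin n => s (i, j)) := by
    ext x
    simp only [matUncurry, MeasurableEquiv.coe_mk, Equiv.curry, Equiv.coe_fn_symm_mk,
      Set.mem_preimage, Set.mem_pi, Set.mem_univ, forall_true_left, Function.uncurry, Prod.forall]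
  rw [hpre]
  have h1 : (volume : Measure (Fin n → Fin n → ℝ))
      (Set.univ.pi fun i : Fin n => Set.univ.pi fun j : Fin n => s (i, j))
      = ∏ i : Fin n, ∏ j : Fin n, volume (s (i, j)) := by
    rw [volume_pi, Measure.pi_pi]
    congr 1
    funext i
    rw [volume_pi, Measure.pi_pi]
  rw [h1]
  exact (Fintype.prod_prod_type (f := fun p => volume (s p))).symm

lemma volume_zero_set_of_analytic_mat (n : ℕ) (f : (Fin n → Fin n → ℝ) → ℂ)
    (hf : ∀ x, AnalyticAt ℝ f x) (hwit : ∃ a, f a ≠ 0) :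
    volume {x : Fin n → Fin n → ℝ | f x = 0} = 0 := by
  obtain ⟨a, ha⟩ := hwit
  have hfc : Continuous f := continuous_iff_continuousAt.mpr fun x => (hf x).continuousAt
  have hZmeas : MeasurableSet {x : Fin n → Fin n → ℝ | f x = 0} :=
    (isClosed_eq hfc continuous_const).measurableSet
  -- linear reindexing map
  let L₀ : (Fin (n * n) → ℝ) →ₗ[ℝ] (Fin n → Fin n → ℝ) :=
    { toFun := fun x i j => x (finProdFinEquiv (i, j))
      map_add' := fun _ _ => rfl
      map_smul' := fun _ _ => rfl }
  let L : (Fin (n * n) → ℝ) →L[ℝ] (Fin n → Fin n → ℝ) := L₀.toContinuousLinearMap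
  -- measurable equiv agreeing with L
  let e2 := MeasurableEquiv.piCongrLeft (fun _ : Fin n × Fin n => ℝ) finProdFinEquiv.symm
  let E : (Fin (n * n) → ℝ) ≃ᵐ (Fin n → Fin n → ℝ) := e2.trans (matUncurry n).symm
  have hEpres : MeasurePreserving E volume volume :=
    ((matUncurry_measurePreserving n).symm (matUncurry n)).comp
      (MeasureTheory.volume_measurePreserving_piCongrLeft (fun _ => ℝ) finProdFinEquiv.symm)
  have hE : ∀ x, E x = L x := by
    intro x
    funext i j
    show (matUncurry n).symm (e2 x) i j = x (finProdFinEquiv (i, j))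
    have h2 : e2 x = fun p : Fin n × Fin n => x (finProdFinEquiv p) := by
      funext p
      simp [e2, MeasurableEquiv.piCongrLeft, Equiv.piCongrLeft, Equiv.piCongrLeft',
        eq_rec_constant]
    rw [h2]
    simp [matUncurry, Equiv.curry]
  have hpre : E ⁻¹' {x | f x = 0} = {y | f (L y) = 0} := by
    ext y; simp only [Set.mem_preimage, Set.mem_setOf_eq, hE y]
  have := hEpres.measure_preimage hZmeas.nullMeasurableSet
  rw [hpre] at this
  rw [← this]
  refine volume_zero_set_of_analytic_fin (n * n) (fun y => f (L y))
    (fun y => (hf (L y)).comp (L.analyticAt y)) ⟨E.symm a, ?_⟩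
  show f (L (E.symm a)) ≠ 0
  rw [← hE (E.symm a), MeasurableEquiv.apply_symm_apply]
  exact ha

open Polynomial Matrix

variable {n : ℕ}

lemma eval_charpoly' (N : Matrix (Fin n) (Fin n) ℂ) (x : ℂ) :
    (N.charpoly).eval x = ((Matrix.scalar (Fin n) x) - N).det := by
  rw [Matrix.charpoly]
  rw [show (charmatrix N).det.eval x = ((evalRingHom x) (charmatrix N).det) from rfl]
  rw [RingHom.map_det]
  congr 1
  ext i j
  by_cases hij : i = j
  · subst hij
    simp [charmatrix_apply_eq, Matrix.scalar_apply]
  · simp [charmatrix_apply_ne _ _ _ hij, Matrix.scalar_apply, Matrix.one_apply_ne hij,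
      Matrix.diagonal_apply_ne _ hij, Matrix.sub_apply]

lemma mem_spectrum_iff_isRoot (N : Matrix (Fin n) (Fin n) ℂ) (μ : ℂ) :
    μ ∈ spectrum ℂ N ↔ (N.charpoly).IsRoot μ := by
  rw [spectrum.mem_iff, Matrix.isUnit_iff_isUnit_det, isUnit_iff_ne_zero, not_not,
    Polynomial.IsRoot, eval_charpoly']
  congr! 2


lemma distinct_roots_iff (hn : 1 ≤ n) (N : Matrix (Fin n) (Fin n) ℂ) :
    N.charpoly.roots.toFinset.card = n ↔
      (Polynomial.aeval N (derivative N.charpoly)).det ≠ 0 := by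
  set p := N.charpoly with hp
  have hmonic : p.Monic := N.charpoly_monic
  have hpne : p ≠ 0 := hmonic.ne_zero
  have hdeg : p.natDegree = n := by
    rw [hp, Matrix.charpoly_natDegree_eq_dim, Fintype.card_fin]
  have hsplits : p.Splits := IsAlgClosed.splits p
  have hcard : Multiset.card p.roots = n := by
    rw [← hdeg]; exact (Polynomial.splits_iff_card_roots.mp hsplits)
  -- spectrum is nonempty
  have hspec : ∀ μ : ℂ, μ ∈ spectrum ℂ N ↔ p.IsRoot μ := fun μ => mem_spectrum_iff_isRoot N μ
  have hne : (spectrum ℂ N).Nonempty := by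
    obtain ⟨r, hr⟩ := Complex.exists_root (f := p) (by
      rw [Polynomial.degree_eq_natDegree hpne, hdeg]
      exact_mod_cast Nat.pos_of_ne_zero (by omega))
    exact ⟨r, (hspec r).mpr hr⟩
  have hsm : spectrum ℂ (Polynomial.aeval N (derivative p)) =
      (fun k => Polynomial.eval k (derivative p)) '' spectrum ℂ N :=
    spectrum.map_polynomial_aeval_of_nonempty N (derivative p) hne
  have hdetiff : (Polynomial.aeval N (derivative p)).det = 0 ↔
      (0 : ℂ) ∈ spectrum ℂ (Polynomial.aeval N (derivative p)) := by
    rw [spectrum.mem_iff, Matrix.isUnit_iff_isUnit_det, isUnit_iff_ne_zero, not_not]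
    simp only [map_zero, zero_sub, det_neg, Fintype.card_fin]
    constructor
    · intro hd; rw [hd, mul_zero]
    · intro hd
      rcases mul_eq_zero.mp hd with hcontra | hgood
      · exact absurd hcontra (pow_ne_zero _ (by norm_num))
      · exact hgood
  constructor
  · intro hcardn
    have hnodup : p.roots.Nodup :=
      Multiset.toFinset_card_eq_card_iff_nodup.mp (by rw [hcardn, hcard])
    intro hdet
    have h0 := hdetiff.mp hdet
    rw [hsm] at h0
    obtain ⟨μ, hμ, hμ0⟩ := h0
    have h2 : 1 < p.rootMultiplicity μ := by
      rw [Polynomial.one_lt_rootMultiplicity_iff_isRoot hpne]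
      exact ⟨(hspec μ).mp hμ, hμ0⟩
    have hle : p.roots.count μ ≤ 1 := Multiset.nodup_iff_count_le_one.mp hnodup μ
    rw [Polynomial.count_roots] at hle
    omega
  · intro hdet
    rw [← hcard, Multiset.toFinset_card_eq_card_iff_nodup, Multiset.nodup_iff_count_le_one]
    intro μ
    by_contra hcount
    push_neg at hcount
    rw [Polynomial.count_roots] at hcount
    have h2 := (Polynomial.one_lt_rootMultiplicity_iff_isRoot hpne).mp hcount
    exact hdet (hdetiff.mpr (by rw [hsm]; exact ⟨μ, (hspec μ).mpr h2.1, h2.2⟩))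

open Polynomial Matrix

section Analytic

attribute [local instance] Matrix.linftyOpNormedAddCommGroup Matrix.linftyOpNormedRing
  Matrix.linftyOpNormedAlgebra Matrix.linftyOpNormedSpace

variable (n : ℕ)

lemma det_analytic (x : Matrix (Fin n) (Fin n) ℂ) :
    AnalyticAt ℝ (fun N : Matrix (Fin n) (Fin n) ℂ => N.det) x := by
  have hrw : (fun N : Matrix (Fin n) (Fin n) ℂ => N.det)
      = fun N => ∑ σ : Equiv.Perm (Fin n), (Equiv.Perm.sign σ : ℂ) * ∏ i, N (σ i) i :=
    funext fun N => N.det_apply'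
  rw [hrw]
  apply Finset.analyticAt_fun_sum
  intro σ _
  apply analyticAt_const.mul
  apply Finset.analyticAt_fun_prod
  intro i _
  let P : Matrix (Fin n) (Fin n) ℂ →L[ℝ] ℂ :=
    LinearMap.toContinuousLinearMap
      { toFun := fun N => N (σ i) i
        map_add' := fun _ _ => rfl
        map_smul' := fun _ _ => rfl }
  exact P.analyticAt x

lemma coeff_charpoly_analytic (j : ℕ) (x : Matrix (Fin n) (Fin n) ℂ) :
    AnalyticAt ℝ (fun N : Matrix (Fin n) (Fin n) ℂ => (Matrix.charpoly N).coeff j) x := by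
  classical
  set s : Finset ℂ := (Finset.range (n+1)).image (Nat.cast) with hs
  have hinj : Set.InjOn id (s : Set ℂ) := fun a _ b _ hab => hab
  have hcard : s.card = n + 1 := by
    rw [hs, Finset.card_image_of_injective _ Nat.cast_injective, Finset.card_range]
  have hrw : (fun N : Matrix (Fin n) (Fin n) ℂ => (Matrix.charpoly N).coeff j)
      = fun N => ∑ c ∈ s, (Lagrange.basis s id c).coeff j * (Matrix.scalar (Fin n) c - N).det := by
    funext N
    have hne : N.charpoly ≠ 0 := N.charpoly_monic.ne_zero
    have hndeg : N.charpoly.natDegree < s.card := by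
      rw [Matrix.charpoly_natDegree_eq_dim, Fintype.card_fin, hcard]; omega
    have hdeg : N.charpoly.degree < s.card :=
      lt_of_le_of_lt Polynomial.degree_le_natDegree (by exact_mod_cast hndeg)
    conv_lhs => rw [Lagrange.eq_interpolate hinj hdeg, Lagrange.interpolate_apply]
    rw [Polynomial.finset_sum_coeff]
    refine Finset.sum_congr rfl fun c hc => ?_
    rw [Polynomial.coeff_C_mul, id_eq, eval_charpoly']
    ring
  rw [hrw]
  apply Finset.analyticAt_fun_sum
  intro c _
  apply analyticAt_const.mul
  have haff : AnalyticAt ℝ (fun N : Matrix (Fin n) (Fin n) ℂ => Matrix.scalar (Fin n) c - N) x :=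
    analyticAt_const.sub analyticAt_id
  exact AnalyticAt.comp (f := fun N : Matrix (Fin n) (Fin n) ℂ => Matrix.scalar (Fin n) c - N)
    (det_analytic n _) haff

lemma aevalDet_analytic (hn : 1 ≤ n) (x : Matrix (Fin n) (Fin n) ℂ) :
    AnalyticAt ℝ (fun N : Matrix (Fin n) (Fin n) ℂ =>
      (Polynomial.aeval N (Polynomial.derivative (Matrix.charpoly N))).det) x := by
  have hrw : (fun N : Matrix (Fin n) (Fin n) ℂ =>
        (Polynomial.aeval N (Polynomial.derivative (Matrix.charpoly N))).det)
      = fun N => (∑ k ∈ Finset.range n, ((Matrix.charpoly N).coeff (k+1) * ((k : ℂ)+1)) • N^k).det := by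
    funext N
    congr 1
    have hd : (Polynomial.derivative (Matrix.charpoly N)).natDegree < n := by
      have h0 : (Matrix.charpoly N).natDegree = n := by
        rw [Matrix.charpoly_natDegree_eq_dim, Fintype.card_fin]
      have := Polynomial.natDegree_derivative_lt (p := Matrix.charpoly N) (by omega)
      omega
    rw [Polynomial.aeval_eq_sum_range' hd]
    refine Finset.sum_congr rfl fun k _ => ?_
    rw [Polynomial.coeff_derivative]
  rw [hrw]
  refine AnalyticAt.comp
    (f := fun N : Matrix (Fin n) (Fin n) ℂ =>
      ∑ k ∈ Finset.range n, ((Matrix.charpoly N).coeff (k+1) * ((k : ℂ)+1)) • N^k)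
    (det_analytic n _) ?_
  apply Finset.analyticAt_fun_sum
  intro k _
  exact AnalyticAt.smul ((coeff_charpoly_analytic n (k+1) x).mul analyticAt_const)
    (analyticAt_id.pow k)

lemma F_analytic (h : ℝ) (hn : 1 ≤ n) (x : Fin n → Fin n → ℝ) :
    AnalyticAt ℝ (fun α₀ : Fin n → Fin n → ℝ =>
      (Polynomial.aeval ((NormedSpace.exp (h • Matrix.of α₀)).map Complex.ofReal)
        (Polynomial.derivative
          (((NormedSpace.exp (h • Matrix.of α₀)).map Complex.ofReal).charpoly))).det) x := by
  let A1 : (Fin n → Fin n → ℝ) →L[ℝ] Matrix (Fin n) (Fin n) ℝ :=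
    LinearMap.toContinuousLinearMap
      { toFun := fun α₀ => h • Matrix.of α₀
        map_add' := fun a b => smul_add _ _ _
        map_smul' := fun c a => by exact smul_comm h c (Matrix.of a) }
  let A2 : Matrix (Fin n) (Fin n) ℝ →L[ℝ] Matrix (Fin n) (Fin n) ℂ :=
    LinearMap.toContinuousLinearMap
      { toFun := fun M => M.map Complex.ofReal
        map_add' := fun a b => by
          ext i j; simp [Matrix.map_apply]
        map_smul' := fun c a => by
          ext i j; simp [Matrix.map_apply, Complex.real_smul] }
  have hexp : AnalyticAt ℝ (NormedSpace.exp : Matrix (Fin n) (Fin n) ℝ → _) (A1 x) :=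
    NormedSpace.exp_analytic _
  have h1 : AnalyticAt ℝ ((NormedSpace.exp) ∘ ⇑A1) x := hexp.comp (A1.analyticAt x)
  have h2 : AnalyticAt ℝ (⇑A2 ∘ ((NormedSpace.exp) ∘ ⇑A1)) x :=
    AnalyticAt.comp (g := ⇑A2) (f := (NormedSpace.exp) ∘ ⇑A1) (A2.analyticAt _) h1
  have h3 := AnalyticAt.comp
    (g := fun N : Matrix (Fin n) (Fin n) ℂ =>
      (Polynomial.aeval N (Polynomial.derivative (Matrix.charpoly N))).det)
    (f := ⇑A2 ∘ ((NormedSpace.exp) ∘ ⇑A1))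
    (aevalDet_analytic n hn _) h2
  exact h3

end Analytic

open Polynomial Matrix

lemma charpoly_diagonal {n : ℕ} (d : Fin n → ℂ) :
    (Matrix.diagonal d).charpoly = ∏ i : Fin n, (X - C (d i)) := by
  rw [Matrix.charpoly]
  have : charmatrix (Matrix.diagonal d) = Matrix.diagonal (fun i => X - C (d i)) := by
    ext i j
    by_cases hij : i = j
    · subst hij; simp [charmatrix_apply_eq]
    · simp [charmatrix_apply_ne _ _ _ hij, Matrix.diagonal_apply_ne _ hij]
  rw [this, Matrix.det_diagonal]

lemma witness_card (h : ℝ) (hh : h ≠ 0) (n : ℕ) :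
    (((NormedSpace.exp (h • Matrix.of (fun i j : Fin n => if i = j then (i : ℝ) else 0))).map
      Complex.ofReal).charpoly.roots.toFinset.card = n) := by
  classical
  have h1 : Matrix.of (fun i j : Fin n => if i = j then (i : ℝ) else 0)
      = Matrix.diagonal (fun i : Fin n => (i : ℝ)) := by
    ext i j
    by_cases hij : i = j
    · subst hij; simp
    · simp [Matrix.diagonal_apply_ne _ hij, hij]
  rw [h1, ← Matrix.diagonal_smul, Matrix.exp_diagonal, Pi.exp_def]
  rw [Matrix.diagonal_map Complex.ofReal_zero]
  set dC : Fin n → ℂ := fun i => ((NormedSpace.exp ((h • fun i : Fin n => (i:ℝ)) i) : ℝ) : ℂ) with hdC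
  rw [charpoly_diagonal]
  have h2 : ∏ i : Fin n, (X - C (dC i))
      = (Multiset.map (fun a : ℂ => X - C a) (Multiset.map dC Finset.univ.val)).prod := by
    rw [Multiset.map_map]
    rfl
  rw [h2, Polynomial.roots_multiset_prod_X_sub_C]
  have hinj : Function.Injective dC := by
    intro i j hij
    rw [hdC] at hij
    simp only [Pi.smul_apply, smul_eq_mul, ← Real.exp_eq_exp_ℝ] at hij
    have := Complex.ofReal_injective hij
    have := Real.exp_injective this
    have := mul_left_cancel₀ hh this
    exact_mod_cast Fin.val_injective (by exact_mod_cast this)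
  have hnodup : (Multiset.map dC Finset.univ.val).Nodup :=
    Finset.univ.nodup.map hinj
  rw [Multiset.toFinset_card_of_nodup hnodup, Multiset.card_map]
  simp

open MeasureTheory

/-- Fix `h > 0` and `n ≥ 1`. The set `A` of real `n×n` matrices `α₀` such that the
matrix exponential `exp(h·α₀)` has `n` pairwise distinct complex eigenvalues (its
characteristic polynomial over `ℂ` has `n` distinct roots) is open, and its
complement has Lebesgue measure zero in `M_n(ℝ) ≅ ℝ^{n²}`. -/
theorem stmt_8 (h : ℝ) (hh : 0 < h) (n : ℕ) (hn : 1 ≤ n) :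
    IsOpen {α₀ : Fin n → Fin n → ℝ |
      (((NormedSpace.exp (h • Matrix.of α₀)).map Complex.ofReal).charpoly.roots.toFinset.card
        = n)} ∧
    volume {α₀ : Fin n → Fin n → ℝ |
      (((NormedSpace.exp (h • Matrix.of α₀)).map Complex.ofReal).charpoly.roots.toFinset.card
        = n)}ᶜ = 0 := by
  classical
  have hFan : ∀ x, AnalyticAt ℝ (fun α₀ : Fin n → Fin n → ℝ =>
      (Polynomial.aeval ((NormedSpace.exp (h • Matrix.of α₀)).map Complex.ofReal)
        (Polynomial.derivative
          (((NormedSpace.exp (h • Matrix.of α₀)).map Complex.ofReal).charpoly))).det) x :=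
    fun x => F_analytic n h hn x
  set F : (Fin n → Fin n → ℝ) → ℂ := fun α₀ =>
    (Polynomial.aeval ((NormedSpace.exp (h • Matrix.of α₀)).map Complex.ofReal)
      (Polynomial.derivative
        (((NormedSpace.exp (h • Matrix.of α₀)).map Complex.ofReal).charpoly))).det with hFdef
  have hset : {α₀ : Fin n → Fin n → ℝ |
      (((NormedSpace.exp (h • Matrix.of α₀)).map Complex.ofReal).charpoly.roots.toFinset.card
        = n)} = F ⁻¹' {0}ᶜ := by
    ext α₀
    simp only [Set.mem_setOf_eq, Set.mem_preimage, Set.mem_compl_iff, Set.mem_singleton_iff]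
    exact distinct_roots_iff hn _
  have hFcont : Continuous F := continuous_iff_continuousAt.mpr fun x => (hFan x).continuousAt
  constructor
  · rw [hset]
    exact isOpen_compl_singleton.preimage hFcont
  · have hcompl : {α₀ : Fin n → Fin n → ℝ |
        (((NormedSpace.exp (h • Matrix.of α₀)).map Complex.ofReal).charpoly.roots.toFinset.card
          = n)}ᶜ = {x : Fin n → Fin n → ℝ | F x = 0} := by
      rw [hset]
      ext x
      simp [Set.mem_compl_iff]
    rw [hcompl]
    refine volume_zero_set_of_analytic_mat n F hFan
      ⟨(fun i j : Fin n => if i = j then (i : ℝ) else 0), ?_⟩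
    exact (distinct_roots_iff hn _).mp (witness_card h (ne_of_gt hh) n)
end

section
/- Fix h > 0 and let α₀ be an n×n real matrix such that exp(h·α₀) has n pairwise distinct complex eigenvalues. Then the solution set S = { α ∈ M_n(ℝ) : exp(h·α) = exp(h·α₀) } is at most countable, and every point of S is isolated in S (i.e. S is a discrete subset of M_n(ℝ)). -/
open Polynomial Matrix NormedSpace

namespace Stmt9Aux

variable {n : ℕ}

lemma eval_charpoly_eq (M : Matrix (Fin n) (Fin n) ℂ) (z : ℂ) :
    M.charpoly.eval z = (z • (1 : Matrix (Fin n) (Fin n) ℂ) - M).det := by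
  rw [Matrix.charpoly, eval_det, Matrix.matPolyEquiv_charmatrix]
  congr 1
  rw [eval_sub, eval_X, eval_C, scalar_apply, ← Matrix.smul_one_eq_diagonal]

lemma exists_eigenvec {M : Matrix (Fin n) (Fin n) ℂ} {z : ℂ} (hr : M.charpoly.IsRoot z) :
    ∃ v, v ≠ 0 ∧ M *ᵥ v = z • v := by
  have hdet : (z • (1 : Matrix (Fin n) (Fin n) ℂ) - M).det = 0 := by
    rw [← eval_charpoly_eq]; exact hr
  obtain ⟨v, hv0, hv⟩ := Matrix.exists_mulVec_eq_zero_iff.2 hdet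
  refine ⟨v, hv0, ?_⟩
  rw [sub_mulVec, smul_mulVec, one_mulVec, sub_eq_zero] at hv
  exact hv.symm

lemma countable_exp_fiber (w : ℂ) : {z : ℂ | Complex.exp z = w}.Countable := by
  by_cases hne : ∃ z₀, Complex.exp z₀ = w
  · obtain ⟨z₀, hz⟩ := hne
    have hsub : {z : ℂ | Complex.exp z = w} ⊆
        Set.range fun k : ℤ => z₀ + k * (2 * Real.pi * Complex.I) := by
      intro z hzm
      have hzz : Complex.exp z = Complex.exp z₀ := by
        rw [Set.mem_setOf_eq] at hzm; rw [hzm, hz]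
      obtain ⟨k, hk⟩ := Complex.exp_eq_exp_iff_exists_int.1 hzz
      exact ⟨k, hk.symm⟩
    exact (Set.countable_range _).mono hsub
  · have : {z : ℂ | Complex.exp z = w} = ∅ := by
      ext z; simp only [Set.mem_setOf_eq, Set.mem_empty_iff_false, iff_false]
      exact fun hz => hne ⟨z, hz⟩
    rw [this]; exact Set.countable_empty

lemma repr_mulVec_eq_zero (b : Module.Basis (Fin n) ℂ (Fin n → ℂ)) (μ : Fin n → ℂ)
    (hμ : Function.Injective μ) {A : Matrix (Fin n) (Fin n) ℂ}
    (hA : ∀ i, A *ᵥ b i = μ i • b i) {B : Matrix (Fin n) (Fin n) ℂ}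
    (hAB : A * B = B * A) (j i : Fin n) (hij : i ≠ j) :
    b.repr (B *ᵥ b j) i = 0 := by
  set w := B *ᵥ b j with hwdef
  set c : Fin n →₀ ℂ := b.repr w with hcdef
  have hw : A *ᵥ w = μ j • w := by
    rw [hwdef, mulVec_mulVec, hAB, ← mulVec_mulVec, hA, mulVec_smul]
  have hsum : A *ᵥ w = ∑ k, (c k * μ k) • b k := by
    have h1 : w = ∑ k, c k • b k := (b.sum_repr w).symm
    conv_lhs => rw [h1]
    rw [show (A *ᵥ ∑ k, c k • b k) = A.mulVecLin (∑ k, c k • b k) from rfl, map_sum]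
    refine Finset.sum_congr rfl fun k _ => ?_
    rw [_root_.map_smul, mulVecLin_apply, hA, smul_smul]
  have e1 : b.repr (A *ᵥ w) i = c i * μ i := by
    rw [hsum, map_sum]
    simp [Module.Basis.repr_self, Finsupp.single_apply]
  have e2 : b.repr (A *ᵥ w) i = μ j * c i := by
    rw [hw, _root_.map_smul]
    simp [hcdef]
  have hci : c i * (μ i - μ j) = 0 := by
    linear_combination e1.symm.trans e2
  rcases mul_eq_zero.1 hci with hc0 | hc0
  · exact hc0
  · exact absurd (sub_eq_zero.1 hc0) (fun hh => hij (hμ hh))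

noncomputable def Psi (b : Module.Basis (Fin n) ℂ (Fin n → ℂ)) :
    Matrix (Fin n) (Fin n) ℂ ≃ₐ[ℂ] Matrix (Fin n) (Fin n) ℂ :=
  Matrix.toLinAlgEquiv'.trans (LinearMap.toMatrixAlgEquiv b)

lemma Psi_apply (b : Module.Basis (Fin n) ℂ (Fin n → ℂ)) (B : Matrix (Fin n) (Fin n) ℂ) (i j : Fin n) :
    Psi b B i j = b.repr (B *ᵥ b j) i := by
  rw [Psi, AlgEquiv.trans_apply, LinearMap.toMatrixAlgEquiv_apply, Matrix.toLinAlgEquiv'_apply]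

lemma Psi_continuous (b : Module.Basis (Fin n) ℂ (Fin n → ℂ)) : Continuous (Psi b) :=
  by simpa using (Psi b).toLinearMap.continuous_of_finiteDimensional

lemma Psi_exp (b : Module.Basis (Fin n) ℂ (Fin n → ℂ)) (X : Matrix (Fin n) (Fin n) ℂ) :
    Psi b (exp X) = exp (Psi b X) := by
  have hcont : Continuous (Psi b) := Psi_continuous b
  letI : SeminormedRing (Matrix (Fin n) (Fin n) ℂ) := Matrix.linftyOpSemiNormedRing
  letI : NormedRing (Matrix (Fin n) (Fin n) ℂ) := Matrix.linftyOpNormedRing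
  letI : NormedAlgebra ℝ (Matrix (Fin n) (Fin n) ℂ) := Matrix.linftyOpNormedAlgebra
  letI : NormedAlgebra ℚ (Matrix (Fin n) (Fin n) ℂ) := Matrix.linftyOpNormedAlgebra
  exact map_exp (Psi b) hcont X

lemma exp_map_ofReal (M : Matrix (Fin n) (Fin n) ℝ) :
    exp (M.map Complex.ofReal) = (exp M).map Complex.ofReal := by
  have hcont : Continuous fun M : Matrix (Fin n) (Fin n) ℝ => M.map Complex.ofReal :=
    continuous_id.matrix_map Complex.continuous_ofReal
  letI : SeminormedRing (Matrix (Fin n) (Fin n) ℝ) := Matrix.linftyOpSemiNormedRing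
  letI : NormedRing (Matrix (Fin n) (Fin n) ℝ) := Matrix.linftyOpNormedRing
  letI : NormedAlgebra ℝ (Matrix (Fin n) (Fin n) ℝ) := Matrix.linftyOpNormedAlgebra
  letI : NormedAlgebra ℚ (Matrix (Fin n) (Fin n) ℝ) := Matrix.linftyOpNormedAlgebra
  letI : SeminormedRing (Matrix (Fin n) (Fin n) ℂ) := Matrix.linftyOpSemiNormedRing
  letI : NormedRing (Matrix (Fin n) (Fin n) ℂ) := Matrix.linftyOpNormedRing
  letI : NormedAlgebra ℝ (Matrix (Fin n) (Fin n) ℂ) := Matrix.linftyOpNormedAlgebra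
  letI : NormedAlgebra ℚ (Matrix (Fin n) (Fin n) ℂ) := Matrix.linftyOpNormedAlgebra
  have := map_exp
    (Complex.ofRealHom.mapMatrix : Matrix (Fin n) (Fin n) ℝ →+* Matrix (Fin n) (Fin n) ℂ)
    hcont M
  exact this.symm

lemma exp_coe (z : ℂ) : exp z = Complex.exp z := by
  rw [Complex.exp_eq_exp_ℂ]

end Stmt9Aux

open Stmt9Aux

/-- Fix `h > 0` and let `α₀` be a real `n×n` matrix such that `exp(h·α₀)` has `n`
pairwise distinct complex eigenvalues. Then the solution set
`S = {α : exp(h·α) = exp(h·α₀)}` is at most countable and each of its points is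
isolated in `S`. -/
theorem stmt_9 (h : ℝ) (hh : 0 < h) (n : ℕ) (α₀ : Matrix (Fin n) (Fin n) ℝ)
    (hdist : ((NormedSpace.exp (h • α₀)).map Complex.ofReal).charpoly.roots.toFinset.card = n) :
    Set.Countable {α : Matrix (Fin n) (Fin n) ℝ |
        NormedSpace.exp (h • α) = NormedSpace.exp (h • α₀)} ∧
    ∀ α ∈ {α : Matrix (Fin n) (Fin n) ℝ |
        NormedSpace.exp (h • α) = NormedSpace.exp (h • α₀)},
      ∃ U ∈ nhds α, U ∩ {α : Matrix (Fin n) (Fin n) ℝ |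
        NormedSpace.exp (h • α) = NormedSpace.exp (h • α₀)} = {α} := by
  rcases Nat.eq_zero_or_pos n with hn0 | hn0
  · subst hn0
    haveI : Subsingleton (Matrix (Fin 0) (Fin 0) ℝ) :=
      ⟨fun a b => by ext i j; exact i.elim0⟩
    constructor
    · exact Set.Subsingleton.countable (Set.subsingleton_of_subsingleton)
    · intro α hα
      refine ⟨Set.univ, Filter.univ_mem, ?_⟩
      ext β
      simp only [Set.mem_inter_iff, Set.mem_univ, true_and, Set.mem_singleton_iff,
        Set.mem_setOf_eq]
      constructor
      · intro _; exact Subsingleton.elim β α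
      · intro hβ; rw [hβ]; exact hα
  haveI : Nonempty (Fin n) := Fin.pos_iff_nonempty.1 hn0
  set A : Matrix (Fin n) (Fin n) ℂ := (NormedSpace.exp (h • α₀)).map Complex.ofReal with hAdef
  let e : Fin n ≃ {x // x ∈ A.charpoly.roots.toFinset} :=
    (finCongr hdist.symm).trans (A.charpoly.roots.toFinset.equivFin).symm
  set μ : Fin n → ℂ := fun i => ((e i : ℂ)) with hμdef
  have hμinj : Function.Injective μ := fun i j hij => e.injective (Subtype.ext hij)
  have hroot : ∀ i, A.charpoly.IsRoot (μ i) := fun i =>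
    (Polynomial.mem_roots'.1 (Multiset.mem_toFinset.1 (e i).2)).2
  choose v hv0 hveig using fun i => Stmt9Aux.exists_eigenvec (hroot i)
  have heig : ∀ i, Module.End.HasEigenvector (Matrix.mulVecLin A) (μ i) (v i) := fun i =>
    ⟨Module.End.mem_eigenspace_iff.2 (by rw [mulVecLin_apply]; exact hveig i), hv0 i⟩
  have hli : LinearIndependent ℂ v :=
    Module.End.eigenvectors_linearIndependent' (Matrix.mulVecLin A) μ hμinj v heig
  have hcard : Fintype.card (Fin n) = Module.finrank ℂ (Fin n → ℂ) := by simp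
  let b : Module.Basis (Fin n) ℂ (Fin n → ℂ) := basisOfLinearIndependentOfCardEqFinrank hli hcard
  have hb : ⇑b = v := coe_basisOfLinearIndependentOfCardEqFinrank hli hcard
  have hbeig : ∀ i, A *ᵥ b i = μ i • b i := fun i => by rw [hb]; exact hveig i
  set Φ : Matrix (Fin n) (Fin n) ℝ → (Fin n → ℂ) :=
    fun β i => b.repr (((h • β).map Complex.ofReal) *ᵥ b i) i with hΦdef
  -- basic facts about elements of S
  have hexpB : ∀ α : Matrix (Fin n) (Fin n) ℝ,
      NormedSpace.exp (h • α) = NormedSpace.exp (h • α₀) →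
      NormedSpace.exp ((h • α).map Complex.ofReal) = A := fun α hα => by
    rw [Stmt9Aux.exp_map_ofReal, hα]
  have hcomm : ∀ α : Matrix (Fin n) (Fin n) ℝ,
      NormedSpace.exp (h • α) = NormedSpace.exp (h • α₀) →
      A * ((h • α).map Complex.ofReal) = ((h • α).map Complex.ofReal) * A := fun α hα => by
    have hc : Commute ((h • α).map Complex.ofReal)
        (NormedSpace.exp ((h • α).map Complex.ofReal)) := (Commute.refl _).exp_right
    rw [hexpB α hα] at hc
    exact hc.symm.eq
  have hdiag : ∀ α : Matrix (Fin n) (Fin n) ℝ,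
      NormedSpace.exp (h • α) = NormedSpace.exp (h • α₀) →
      Psi b ((h • α).map Complex.ofReal) = Matrix.diagonal (Φ α) := fun α hα => by
    ext i j
    rw [Psi_apply]
    rcases eq_or_ne i j with rfl | hij
    · rw [Matrix.diagonal_apply_eq]
    · rw [Matrix.diagonal_apply_ne _ hij,
        Stmt9Aux.repr_mulVec_eq_zero b μ hμinj hbeig (hcomm α hα) j i hij]
  have hPsiA : Psi b A = Matrix.diagonal μ := by
    ext i j
    rw [Psi_apply]
    rcases eq_or_ne i j with rfl | hij
    · rw [Matrix.diagonal_apply_eq, hbeig i, _root_.map_smul]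
      simp [Module.Basis.repr_self]
    · rw [Matrix.diagonal_apply_ne _ hij,
        Stmt9Aux.repr_mulVec_eq_zero b μ hμinj hbeig rfl j i hij]
  have hexpPhi : ∀ α : Matrix (Fin n) (Fin n) ℝ,
      NormedSpace.exp (h • α) = NormedSpace.exp (h • α₀) →
      ∀ i, Complex.exp (Φ α i) = μ i := fun α hα => by
    have h1 : Matrix.diagonal μ = NormedSpace.exp (Matrix.diagonal (Φ α)) := by
      rw [← hPsiA, ← hdiag α hα, ← Stmt9Aux.Psi_exp, hexpB α hα]
    rw [Matrix.exp_diagonal] at h1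
    have h2 : μ = NormedSpace.exp (Φ α) := Matrix.diagonal_injective h1
    intro i
    have h3 := congrFun h2 i
    rw [Pi.coe_exp, Stmt9Aux.exp_coe] at h3
    exact h3.symm
  have hrecover : ∀ α : Matrix (Fin n) (Fin n) ℝ,
      NormedSpace.exp (h • α) = NormedSpace.exp (h • α₀) →
      (h • α).map Complex.ofReal = (Psi b).symm (Matrix.diagonal (Φ α)) := fun α hα => by
    rw [← hdiag α hα, AlgEquiv.symm_apply_apply]
  have hinj : ∀ α : Matrix (Fin n) (Fin n) ℝ,
      NormedSpace.exp (h • α) = NormedSpace.exp (h • α₀) →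
      ∀ α' : Matrix (Fin n) (Fin n) ℝ,
      NormedSpace.exp (h • α') = NormedSpace.exp (h • α₀) →
      Φ α = Φ α' → α = α' := by
    intro α hα α' hα' hPhi
    have hmap : (h • α).map Complex.ofReal = (h • α').map Complex.ofReal := by
      rw [hrecover α hα, hrecover α' hα', hPhi]
    ext i j
    have hij := congrFun (congrFun hmap i) j
    simp only [Matrix.map_apply, Matrix.smul_apply, smul_eq_mul, Complex.ofReal_inj] at hij
    exact mul_left_cancel₀ (ne_of_gt hh) hij
  have hPhicont : Continuous Φ := by
    apply continuous_pi
    intro i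
    have c1 : Continuous fun β : Matrix (Fin n) (Fin n) ℝ => (h • β).map Complex.ofReal :=
      (continuous_id.const_smul h).matrix_map Complex.continuous_ofReal
    have c2 : Continuous fun M : Matrix (Fin n) (Fin n) ℂ => M *ᵥ b i := by
      apply continuous_pi
      intro j
      simp only [Matrix.mulVec, dotProduct]
      exact continuous_finset_sum _ fun k _ => by
        fun_prop
    have c3 : Continuous fun w : Fin n → ℂ => b.repr w i := by
      have hc : Continuous (b.equivFun : (Fin n → ℂ) →ₗ[ℂ] (Fin n → ℂ)) :=
        LinearMap.continuous_of_finiteDimensional _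
      have := (continuous_apply i).comp hc
      exact this
    exact c3.comp (c2.comp c1)
  constructor
  · have hmaps : Set.MapsTo Φ
        {α : Matrix (Fin n) (Fin n) ℝ |
          NormedSpace.exp (h • α) = NormedSpace.exp (h • α₀)}
        {f : Fin n → ℂ | ∀ i, f i ∈ {z : ℂ | Complex.exp z = μ i}} :=
      fun α hα i => hexpPhi α hα i
    have hT : Set.Countable {f : Fin n → ℂ | ∀ i, f i ∈ {z : ℂ | Complex.exp z = μ i}} :=
      Set.countable_pi fun i => Stmt9Aux.countable_exp_fiber (μ i)
    exact hmaps.countable_of_injOn (fun α hα α' hα' => hinj α hα α' hα') hT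
  · intro α hα
    refine ⟨Φ ⁻¹' Metric.ball (Φ α) 1, (Metric.isOpen_ball.preimage hPhicont).mem_nhds
      (by simp [Metric.mem_ball_self]), ?_⟩
    ext β
    simp only [Set.mem_inter_iff, Set.mem_preimage, Metric.mem_ball, Set.mem_setOf_eq,
      Set.mem_singleton_iff]
    constructor
    · rintro ⟨hdst, hβS⟩
      have hPhieq : Φ β = Φ α := by
        funext i
        have he1 : Complex.exp (Φ β i) = Complex.exp (Φ α i) := by
          rw [hexpPhi β hβS i, hexpPhi α hα i]
        obtain ⟨k, hk⟩ := Complex.exp_eq_exp_iff_exists_int.1 he1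
        by_cases hk0 : k = 0
        · rw [hk, hk0]; simp
        · exfalso
          have hd : dist (Φ β i) (Φ α i) < 1 := lt_of_le_of_lt (dist_le_pi_dist _ _ i) hdst
          have habs : ‖Φ β i - Φ α i‖ < 1 := by rwa [← Complex.dist_eq]
          rw [hk, add_sub_cancel_left] at habs
          have habs2 : ‖((k : ℂ) * (2 * Real.pi * Complex.I))‖
              = |(k : ℝ)| * (2 * Real.pi) := by
            rw [norm_mul, norm_mul, norm_mul, Complex.norm_intCast, Complex.norm_I,
              Complex.norm_real, Real.norm_eq_abs, Complex.norm_two, mul_one, abs_of_pos Real.pi_pos]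
          have h1k : (1 : ℝ) ≤ |(k : ℝ)| := by exact_mod_cast Int.one_le_abs hk0
          rw [habs2] at habs
          nlinarith [Real.pi_gt_three]
      exact hinj β hβS α hα hPhieq
    · rintro rfl
      exact ⟨by simp, hα⟩
end

section
/- Fix h > 0 and let α₀ be an n×n real matrix such that exp(h·α₀) has n pairwise distinct complex eigenvalues and such that all complex eigenvalues of α₀ are real. Then the equation exp(h·α) = exp(h·α₀) has a unique solution among real n×n matrices, namely α = α₀. -/
open Polynomial Matrix

section Aux

variable {n : ℕ}

lemma my_eval_charpoly {K : Type*} [Field K] (M : Matrix (Fin n) (Fin n) K) (μ : K) :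
    M.charpoly.eval μ = (Matrix.diagonal (fun _ => μ) - M).det := by
  rw [Matrix.charpoly, ← Polynomial.coe_evalRingHom, RingHom.map_det]
  congr 1
  ext i j
  by_cases hij : i = j <;>
    simp [hij, Matrix.charmatrix_apply, Matrix.diagonal_apply, Matrix.sub_apply]

lemma my_exists_eigenvec {M : Matrix (Fin n) (Fin n) ℂ} {μ : ℂ}
    (hμ : M.charpoly.IsRoot μ) : ∃ v, v ≠ 0 ∧ M *ᵥ v = μ • v := by
  have hdet : (Matrix.diagonal (fun _ => μ) - M).det = 0 := by
    rw [← my_eval_charpoly]; exact hμ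
  obtain ⟨v, hv, hmul⟩ := Matrix.exists_mulVec_eq_zero_iff.2 hdet
  refine ⟨v, hv, ?_⟩
  have h1 : (Matrix.diagonal (fun _ => μ)) *ᵥ v - M *ᵥ v = 0 := by
    rw [← Matrix.sub_mulVec]; exact hmul
  have h2 : (Matrix.diagonal (fun _ => μ)) *ᵥ v = μ • v := by
    ext i; simp [Matrix.mulVec_diagonal]
  rw [h2] at h1
  rw [sub_eq_zero] at h1; exact h1.symm

lemma my_charpoly_conj {K : Type*} [Field K] (P Q A : Matrix (Fin n) (Fin n) K)
    (hQP : Q * P = 1) : (Q * A * P).charpoly = A.charpoly := by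
  let f : Matrix (Fin n) (Fin n) K →+* Matrix (Fin n) (Fin n) K[X] :=
    (Polynomial.C : K →+* K[X]).mapMatrix
  have hc : ∀ M : Matrix (Fin n) (Fin n) K, charmatrix M = (X : K[X]) • 1 - f M := by
    intro M
    ext i j
    by_cases hij : i = j <;>
      simp [hij, Matrix.charmatrix_apply, Matrix.diagonal_apply, Matrix.one_apply, f]
  have key : charmatrix (Q * A * P) = f Q * charmatrix A * f P := by
    rw [hc, hc, mul_sub, sub_mul, mul_smul_comm, smul_mul_assoc, mul_one, ← _root_.map_mul, hQP,
      _root_.map_one, _root_.map_mul, _root_.map_mul]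
  have hdet : ∀ M : Matrix (Fin n) (Fin n) K, (f M).det = Polynomial.C M.det := by
    intro M
    exact (RingHom.map_det (Polynomial.C) M).symm
  have h1 : (Polynomial.C Q.det) * Polynomial.C P.det = (1 : K[X]) := by
    rw [← _root_.map_mul, ← Matrix.det_mul, hQP, Matrix.det_one, _root_.map_one]
  rw [Matrix.charpoly, key, Matrix.det_mul, Matrix.det_mul, hdet, hdet, ← Matrix.charpoly]
  linear_combination A.charpoly * h1

lemma my_commute_diagonal {K : Type*} [Field K] {d : Fin n → K} (hd : Function.Injective d)
    {B : Matrix (Fin n) (Fin n) K} (hB : B * Matrix.diagonal d = Matrix.diagonal d * B) :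
    B = Matrix.diagonal (fun i => B i i) := by
  ext i j
  by_cases hij : i = j
  · subst hij; simp
  · have h1 := congrFun (congrFun hB i) j
    rw [show (B * Matrix.diagonal d) i j = B i j * d j from Matrix.mul_diagonal _ _ _ _,
      show (Matrix.diagonal d * B) i j = d i * B i j from Matrix.diagonal_mul _ _ _ _] at h1
    have h2 : B i j * (d j - d i) = 0 := by ring_nf; linear_combination h1
    rcases mul_eq_zero.1 h2 with h | h
    · simp [h, Matrix.diagonal_apply_ne _ hij]
    · exact absurd (hd (sub_eq_zero.1 h).symm) hij

lemma my_exp_map_ofReal (M : Matrix (Fin n) (Fin n) ℝ) :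
    (NormedSpace.exp M).map Complex.ofReal =
      NormedSpace.exp (M.map Complex.ofReal) := by
  letI : SeminormedRing (Matrix (Fin n) (Fin n) ℝ) := Matrix.linftyOpSemiNormedRing
  letI : NormedRing (Matrix (Fin n) (Fin n) ℝ) := Matrix.linftyOpNormedRing
  letI : NormedAlgebra ℝ (Matrix (Fin n) (Fin n) ℝ) := Matrix.linftyOpNormedAlgebra
  letI : NormedAlgebra ℚ (Matrix (Fin n) (Fin n) ℝ) := Matrix.linftyOpNormedAlgebra
  letI : NormedRing (Matrix (Fin n) (Fin n) ℂ) := Matrix.linftyOpNormedRing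
  letI : NormedAlgebra ℝ (Matrix (Fin n) (Fin n) ℂ) := Matrix.linftyOpNormedAlgebra
  letI : NormedAlgebra ℂ (Matrix (Fin n) (Fin n) ℂ) := Matrix.linftyOpNormedAlgebra
  have h1 : (NormedSpace.exp M).map Complex.ofReal =
      NormedSpace.exp (M.map Complex.ofReal) := by
    have hcont : Continuous fun A : Matrix (Fin n) (Fin n) ℝ => A.map Complex.ofReal :=
      Continuous.matrix_map continuous_id Complex.continuous_ofReal
    exact NormedSpace.map_exp (Complex.ofRealHom.mapMatrix) hcont M
  rw [h1]

end Aux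

/-- Fix `h > 0` and let `α₀` be a real `n×n` matrix such that `exp(h·α₀)` has `n`
pairwise distinct complex eigenvalues and all complex eigenvalues of `α₀` are real.
Then `α = α₀` is the unique real matrix solution of `exp(h·α) = exp(h·α₀)`. -/
theorem stmt_10 (h : ℝ) (hh : 0 < h) (n : ℕ) (α₀ : Matrix (Fin n) (Fin n) ℝ)
    (hdist : ((NormedSpace.exp (h • α₀)).map Complex.ofReal).charpoly.roots.toFinset.card = n)
    (hreal : ∀ l : ℂ, (α₀.map Complex.ofReal).charpoly.IsRoot l → l.im = 0) :
    {α : Matrix (Fin n) (Fin n) ℝ |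
      NormedSpace.exp (h • α) = NormedSpace.exp (h • α₀)} = {α₀} := by
  ext α
  simp only [Set.mem_setOf_eq, Set.mem_singleton_iff]
  constructor
  · intro hα
    -- complexifications
    set αc := α.map Complex.ofReal with hαcdef
    set α₀c := α₀.map Complex.ofReal with hα₀cdef
    set Ac := (NormedSpace.exp (h • α₀)).map Complex.ofReal with hAcdef
    have hMcsmul : ∀ β : Matrix (Fin n) (Fin n) ℝ,
        (h • β).map Complex.ofReal = (h : ℂ) • β.map Complex.ofReal := by
      intro β; ext i j
      simp [Matrix.map_apply, Matrix.smul_apply, Complex.ofReal_mul]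
    have hexpα : Ac = NormedSpace.exp ((h : ℂ) • αc) := by
      rw [hAcdef, ← hα, my_exp_map_ofReal, hMcsmul]
    have hexpα₀ : Ac = NormedSpace.exp ((h : ℂ) • α₀c) := by
      rw [hAcdef, my_exp_map_ofReal, hMcsmul]
    -- eigenvalues of Ac
    set μ : Fin n → ℂ := fun i => ((Finset.equivFinOfCardEq hdist).symm i : ℂ) with hμdef
    have hμinj : Function.Injective μ := by
      intro i j hij
      exact (Finset.equivFinOfCardEq hdist).symm.injective (Subtype.ext hij)
    have hμroot : ∀ i, Ac.charpoly.IsRoot (μ i) := by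
      intro i
      have hmem := ((Finset.equivFinOfCardEq hdist).symm i).2
      rw [Multiset.mem_toFinset] at hmem
      exact Polynomial.isRoot_of_mem_roots hmem
    choose v hv1 hv2 using fun i => my_exists_eigenvec (hμroot i)
    have hli : LinearIndependent ℂ v := by
      apply Module.End.eigenvectors_linearIndependent' (Matrix.mulVecLin Ac) μ hμinj v
      intro i
      refine ⟨?_, hv1 i⟩
      rw [Module.End.mem_eigenspace_iff]
      simpa [Matrix.mulVecLin_apply] using hv2 i
    -- the change-of-basis matrix
    set P : Matrix (Fin n) (Fin n) ℂ := Matrix.of fun i j => v j i with hPdef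
    have hPunit : IsUnit P := by
      rw [← Matrix.linearIndependent_cols_iff_isUnit]
      have : P.col = v := by funext i; funext j; rfl
      rw [this]; exact hli
    obtain ⟨U, hU⟩ := hPunit
    set Q : Matrix (Fin n) (Fin n) ℂ := ↑U⁻¹ with hQdef
    have hQP : Q * P = 1 := by rw [hQdef, ← hU]; exact U.inv_mul
    have hPQ : P * Q = 1 := by rw [hQdef, ← hU]; exact U.mul_inv
    have hAP : Ac * P = P * Matrix.diagonal μ := by
      ext i j
      rw [Matrix.mul_apply, Matrix.mul_diagonal]
      have h2 : ∑ k, Ac i k * v j k = μ j * v j i := by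
        have h3 := congrFun (hv2 j) i
        simpa [Matrix.mulVec, dotProduct] using h3
      simpa [hPdef, mul_comm] using h2
    have hD : Q * Ac * P = Matrix.diagonal μ := by
      rw [mul_assoc, hAP, ← mul_assoc, hQP, one_mul]
    have conj_mul : ∀ X Y : Matrix (Fin n) (Fin n) ℂ,
        (Q * X * P) * (Q * Y * P) = Q * (X * Y) * P := by
      intro X Y
      calc (Q * X * P) * (Q * Y * P) = Q * (X * (P * Q) * Y) * P := by noncomm_ring
        _ = Q * (X * Y) * P := by rw [hPQ, mul_one]
    -- commutation
    have hcommα : αc * Ac = Ac * αc := by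
      rw [hexpα]
      exact (Commute.exp_right ((Commute.refl αc).smul_right ((h : ℂ)))).eq
    have hcommα₀ : α₀c * Ac = Ac * α₀c := by
      rw [hexpα₀]
      exact (Commute.exp_right ((Commute.refl α₀c).smul_right ((h : ℂ)))).eq
    -- conjugated matrices
    set B := Q * αc * P with hBdef
    set B₀ := Q * α₀c * P with hB₀def
    have hBD : B * Matrix.diagonal μ = Matrix.diagonal μ * B := by
      rw [← hD, hBdef, conj_mul, conj_mul, hcommα]
    have hB₀D : B₀ * Matrix.diagonal μ = Matrix.diagonal μ * B₀ := by
      rw [← hD, hB₀def, conj_mul, conj_mul, hcommα₀]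
    have hBdiag := my_commute_diagonal hμinj hBD
    have hB₀diag := my_commute_diagonal hμinj hB₀D
    set b : Fin n → ℂ := fun i => B i i with hbdef
    set b₀ : Fin n → ℂ := fun i => B₀ i i with hb₀def
    -- exponentials of the diagonal parts
    have hexpconj : ∀ β : Matrix (Fin n) (Fin n) ℂ,
        NormedSpace.exp (Q * β * P) = Q * NormedSpace.exp β * P := by
      intro β
      rw [hQdef, ← hU]
      exact Matrix.exp_units_conj' U β
    have hsmulconj : ∀ β : Matrix (Fin n) (Fin n) ℂ,
        (h : ℂ) • (Q * β * P) = Q * ((h : ℂ) • β) * P := by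
      intro β; rw [mul_smul_comm, smul_mul_assoc]
    have hexpB : NormedSpace.exp ((h : ℂ) • B) = Matrix.diagonal μ := by
      rw [hBdef, hsmulconj, hexpconj, ← hexpα, hD]
    have hexpB₀ : NormedSpace.exp ((h : ℂ) • B₀) = Matrix.diagonal μ := by
      rw [hB₀def, hsmulconj, hexpconj, ← hexpα₀, hD]
    have hdiagsmul : ∀ c : Fin n → ℂ,
        (h : ℂ) • Matrix.diagonal c = Matrix.diagonal (fun i => (h : ℂ) * c i) := by
      intro c; ext i j
      by_cases hij : i = j <;> simp [hij, Matrix.diagonal_apply, Matrix.smul_apply]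
    have hbexp : ∀ i, Complex.exp ((h : ℂ) * b i) = μ i := by
      intro i
      have h1 := hexpB
      rw [hBdiag] at h1
      rw [hdiagsmul, Matrix.exp_diagonal] at h1
      have h2 := congrFun (congrFun h1 i) i
      rw [Matrix.diagonal_apply_eq, Matrix.diagonal_apply_eq, Pi.coe_exp] at h2
      rw [Complex.exp_eq_exp_ℂ]
      exact h2
    have hb₀exp : ∀ i, Complex.exp ((h : ℂ) * b₀ i) = μ i := by
      intro i
      have h1 := hexpB₀
      rw [hB₀diag] at h1
      rw [hdiagsmul, Matrix.exp_diagonal] at h1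
      have h2 := congrFun (congrFun h1 i) i
      rw [Matrix.diagonal_apply_eq, Matrix.diagonal_apply_eq, Pi.coe_exp] at h2
      rw [Complex.exp_eq_exp_ℂ]
      exact h2
    -- characteristic polynomials
    have hcharα : αc.charpoly = ∏ i, (X - C (b i)) := by
      have h1 : B.charpoly = αc.charpoly := my_charpoly_conj P Q αc hQP
      rw [← h1]
      conv_lhs => rw [hBdiag]
      rw [Matrix.charpoly_of_upperTriangular _ (Matrix.blockTriangular_diagonal _)]
      simp [Matrix.diagonal_apply_eq]
    have hcharα₀ : α₀c.charpoly = ∏ i, (X - C (b₀ i)) := by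
      have h1 : B₀.charpoly = α₀c.charpoly := my_charpoly_conj P Q α₀c hQP
      rw [← h1]
      conv_lhs => rw [hB₀diag]
      rw [Matrix.charpoly_of_upperTriangular _ (Matrix.blockTriangular_diagonal _)]
      simp [Matrix.diagonal_apply_eq]
    -- b₀ is real
    have hb₀real : ∀ i, (b₀ i).im = 0 := by
      intro i
      apply hreal
      rw [hcharα₀, Polynomial.IsRoot, Polynomial.eval_prod]
      apply Finset.prod_eq_zero (Finset.mem_univ i)
      simp
    -- conjugate of a root of charpoly of αc is a root
    have hconjroot : ∀ z : ℂ, αc.charpoly.IsRoot z →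
        αc.charpoly.IsRoot ((starRingEnd ℂ) z) := by
      intro z hz
      have hmap : αc.charpoly = α.charpoly.map Complex.ofRealHom := by
        rw [hαcdef, ← Matrix.charpoly_map]
        rfl
      rw [hmap, Polynomial.IsRoot, Polynomial.eval_map] at hz ⊢
      have hcomp : (starRingEnd ℂ).comp Complex.ofRealHom = Complex.ofRealHom := by
        ext r; simp [Complex.conj_ofReal]
      calc Polynomial.eval₂ Complex.ofRealHom ((starRingEnd ℂ) z) α.charpoly
          = Polynomial.eval₂ ((starRingEnd ℂ).comp Complex.ofRealHom)
              ((starRingEnd ℂ) z) α.charpoly := by rw [hcomp]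
        _ = (starRingEnd ℂ) (Polynomial.eval₂ Complex.ofRealHom z α.charpoly) :=
            (Polynomial.hom_eval₂ _ _ _ _).symm
        _ = 0 := by rw [hz, map_zero]
    -- μ is real
    have hμconj : ∀ i, (starRingEnd ℂ) (μ i) = μ i := by
      intro i
      rw [← hb₀exp i, ← Complex.exp_conj]
      congr 1
      rw [_root_.map_mul, Complex.conj_ofReal, Complex.conj_eq_iff_im.2 (hb₀real i)]
    -- b is real
    have hbconj : ∀ i, (starRingEnd ℂ) (b i) = b i := by
      intro i
      have hzroot : αc.charpoly.IsRoot (b i) := by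
        rw [hcharα, Polynomial.IsRoot, Polynomial.eval_prod]
        apply Finset.prod_eq_zero (Finset.mem_univ i)
        simp
      have hcroot := hconjroot _ hzroot
      rw [hcharα, Polynomial.IsRoot, Polynomial.eval_prod, Finset.prod_eq_zero_iff] at hcroot
      obtain ⟨j, -, hj⟩ := hcroot
      rw [Polynomial.eval_sub, Polynomial.eval_X, Polynomial.eval_C, sub_eq_zero] at hj
      have hμji : μ j = μ i := by
        rw [← hbexp j, ← hj]
        calc Complex.exp ((h : ℂ) * (starRingEnd ℂ) (b i))
            = Complex.exp ((starRingEnd ℂ) ((h : ℂ) * b i)) := by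
              congr 1
              rw [_root_.map_mul, Complex.conj_ofReal]
          _ = (starRingEnd ℂ) (Complex.exp ((h : ℂ) * b i)) := Complex.exp_conj _
          _ = (starRingEnd ℂ) (μ i) := by rw [hbexp i]
          _ = μ i := hμconj i
      have hji : j = i := hμinj hμji
      rw [hji] at hj
      exact hj
    have hbim : ∀ i, (b i).im = 0 := fun i => Complex.conj_eq_iff_im.1 (hbconj i)
    -- conclude b = b₀
    have hbb₀ : b = b₀ := by
      funext i
      have h1 : Complex.exp ((h : ℂ) * b i) = Complex.exp ((h : ℂ) * b₀ i) := by
        rw [hbexp i, hb₀exp i]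
      have hbi : b i = ((b i).re : ℂ) := Complex.ext rfl (by simp [hbim i])
      have hb₀i : b₀ i = ((b₀ i).re : ℂ) := Complex.ext rfl (by simp [hb₀real i])
      have h2 : ((Real.exp (h * (b i).re) : ℝ) : ℂ) = ((Real.exp (h * (b₀ i).re) : ℝ) : ℂ) := by
        rw [Complex.ofReal_exp, Complex.ofReal_exp, Complex.ofReal_mul, Complex.ofReal_mul,
          ← hbi, ← hb₀i, h1]
      have h3 : Real.exp (h * (b i).re) = Real.exp (h * (b₀ i).re) := by
        exact_mod_cast h2
      have h4 : h * (b i).re = h * (b₀ i).re := Real.exp_injective h3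
      have h5 : (b i).re = (b₀ i).re := mul_left_cancel₀ (ne_of_gt hh) h4
      rw [hbi, hb₀i, h5]
    -- conclude α = α₀
    have hBB₀ : B = B₀ := by
      rw [hBdiag, hB₀diag, hbb₀]
    have hαc : αc = α₀c := by
      have e1 : P * B * Q = αc := by
        rw [hBdef]
        calc P * (Q * αc * P) * Q = (P * Q) * αc * (P * Q) := by noncomm_ring
          _ = αc := by rw [hPQ, one_mul, mul_one]
      have e2 : P * B₀ * Q = α₀c := by
        rw [hB₀def]
        calc P * (Q * α₀c * P) * Q = (P * Q) * α₀c * (P * Q) := by noncomm_ring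
          _ = α₀c := by rw [hPQ, one_mul, mul_one]
      rw [← e1, ← e2, hBB₀]
    ext i j
    have h6 := congrFun (congrFun hαc i) j
    rw [hαcdef, hα₀cdef] at h6
    simpa [Matrix.map_apply] using h6
  · rintro rfl
    rfl
end

section
/- Let C and D be n×n real matrices and x ∈ ℝ^n such that the vectors x, Cx, C²x, …, C^{n−1}x are linearly independent and C^k x = D^k x for all k = 1, 2, …, n. Then C = D. -/
/-- If `x, Cx, …, C^{n−1}x` are linearly independent and `C^k x = D^k x` for
`k = 1, …, n`, then `C = D`. -/
theorem stmt_12 (n : ℕ) (C D : Matrix (Fin n) (Fin n) ℝ) (x : Fin n → ℝ)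
    (hindep : LinearIndependent ℝ fun i : Fin n => (C ^ (i : ℕ)).mulVec x)
    (heq : ∀ k : ℕ, 1 ≤ k → k ≤ n → (C ^ k).mulVec x = (D ^ k).mulVec x) :
    C = D := by
  rcases Nat.eq_zero_or_pos n with hn | hn
  · subst hn
    ext i j
    exact absurd i.isLt (by omega)
  have : Nonempty (Fin n) := ⟨⟨0, hn⟩⟩
  have hspan : ⊤ ≤ Submodule.span ℝ
      (Set.range fun i : Fin n => (C ^ (i : ℕ)).mulVec x) := by
    rw [hindep.span_eq_top_of_card_eq_finrank (by simp)]
  let b : Module.Basis (Fin n) ℝ (Fin n → ℝ) := Module.Basis.mk hindep hspan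
  have hpow : ∀ i : Fin n, (C ^ (i : ℕ)).mulVec x = (D ^ (i : ℕ)).mulVec x := by
    intro i
    rcases Nat.eq_zero_or_pos (i : ℕ) with h | h
    · simp [h]
    · exact heq _ h (le_of_lt i.isLt)
  have key : Matrix.toLin' C = Matrix.toLin' D := by
    apply b.ext
    intro i
    simp only [b, Module.Basis.mk_apply, Matrix.toLin'_apply]
    have h1 : C.mulVec ((C ^ (i : ℕ)).mulVec x) = (C ^ ((i : ℕ) + 1)).mulVec x := by
      rw [Matrix.mulVec_mulVec, ← pow_succ']
    have h2 : D.mulVec ((C ^ (i : ℕ)).mulVec x) = (D ^ ((i : ℕ) + 1)).mulVec x := by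
      rw [hpow i, Matrix.mulVec_mulVec, ← pow_succ']
    rw [h1, h2]
    exact heq _ (Nat.succ_le_succ (Nat.zero_le _)) i.isLt
  exact Matrix.toLin'.injective key
end
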